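/- Inverse source operator bound: let (λₙ) be positive reals with λₙ ≥ λ₁ > 0, α ∈ (0,1), T > 0, and let g : [0,T] → ℝ be measurable with g ≥ c_g > 0. Define μₙ = ∫₀^T s^{α−1} E_{α,α}(−λₙ s^α) g(T−s) ds. Then μₙ ≥ c_g λₙ^{−1}(1 − E_{α,1}(−λₙ T^α)) > 0, and consequently 1/(λₙ μₙ) ≤ c_g^{−1} (1 − E_{α,1}(−λ₁ T^α))^{−1} for all n. -/

import Mathlib

/-- Two-parameter Mittag-Leffler function (real arguments). -/
noncomputable def ML (α β x : ℝ) : ℝ := ∑' k : ℕ, x ^ k / Real.Gamma (α * k + β)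

open MeasureTheory intervalIntegral in
private lemma pos_one_sub_ML {α T l : ℝ} (hα0 : 0 < α) (hT : 0 < T) (hl : 0 < l)
    (hii : IntervalIntegrable (fun s => s ^ (α - 1) * ML α α (-(l * s ^ α)))
      MeasureTheory.volume 0 T)
    (hEpos : ∀ t : ℝ, 0 ≤ t → 0 < ML α α (-t))
    (hid : ∫ s in (0 : ℝ)..T, s ^ (α - 1) * ML α α (-(l * s ^ α)) =
        l⁻¹ * (1 - ML α 1 (-(l * T ^ α)))) :
    0 < 1 - ML α 1 (-(l * T ^ α)) := by
  have hpos : 0 < ∫ s in (0 : ℝ)..T, s ^ (α - 1) * ML α α (-(l * s ^ α)) := by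
    refine intervalIntegral_pos_of_pos_on hii (fun x hx => ?_) hT
    exact mul_pos (Real.rpow_pos_of_pos hx.1 _) (hEpos _ (mul_nonneg hl.le (Real.rpow_nonneg hx.1.le _)))
  rw [hid] at hpos
  have h2 := mul_pos hl hpos
  rwa [← mul_assoc, mul_inv_cancel₀ hl.ne', one_mul] at h2

open MeasureTheory in
/-- Integrability of the kernel transfers downward in the parameter via scaling. -/
private lemma intervalIntegrable_kernel_of_le {α T l₀ l₁ : ℝ} (hα0 : 0 < α)
    (hT : 0 < T) (hl₁ : 0 < l₁) (hle : l₁ ≤ l₀)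
    (hii : IntervalIntegrable (fun s => s ^ (α - 1) * ML α α (-(l₀ * s ^ α)))
      MeasureTheory.volume 0 T) :
    IntervalIntegrable (fun s => s ^ (α - 1) * ML α α (-(l₁ * s ^ α)))
      MeasureTheory.volume 0 T := by
  have hl₀ : 0 < l₀ := lt_of_lt_of_le hl₁ hle
  set c : ℝ := (l₁ / l₀) ^ (1 / α) with hc
  have hc0 : 0 < c := Real.rpow_pos_of_pos (div_pos hl₁ hl₀) _
  have hc1 : c ≤ 1 := by
    apply Real.rpow_le_one (le_of_lt (div_pos hl₁ hl₀))
    · exact div_le_one_of_le₀ hle hl₀.le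
    · positivity
  have hcα : c ^ α = l₁ / l₀ := by
    rw [hc, ← Real.rpow_mul (le_of_lt (div_pos hl₁ hl₀)),
      one_div_mul_cancel hα0.ne', Real.rpow_one]
  have hTc : T ≤ T / c := by
    rw [le_div_iff₀ hc0]
    nlinarith
  have h2 := hii.comp_mul_left (c := c) enorm_ne_top enorm_ne_top
  rw [zero_div] at h2
  have h3 : IntervalIntegrable
      (fun x => (c * x) ^ (α - 1) * ML α α (-(l₀ * (c * x) ^ α)))
      MeasureTheory.volume 0 T := by
    apply h2.mono_set
    exact Set.uIcc_subset_uIcc (Set.left_mem_uIcc)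
      (Set.mem_uIcc.2 (Or.inl ⟨hT.le, hTc⟩))
  have h4 := h3.const_mul (c ^ ((1 : ℝ) - α))
  rw [intervalIntegrable_iff, Set.uIoc_of_le hT.le] at h4 ⊢
  refine h4.congr_fun (fun x hx => ?_) measurableSet_Ioc
  have hx0 : (0 : ℝ) < x := hx.1
  have key1 : (c * x) ^ (α - 1) = c ^ (α - 1) * x ^ (α - 1) :=
    Real.mul_rpow hc0.le hx0.le
  have key2 : (c * x) ^ α = c ^ α * x ^ α := Real.mul_rpow hc0.le hx0.le
  have key3 : c ^ ((1 : ℝ) - α) * c ^ (α - 1) = 1 := by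
    rw [← Real.rpow_add hc0]
    norm_num
  beta_reduce
  rw [key1, key2, hcα, ← mul_assoc, ← mul_assoc, key3, one_mul]
  congr 2
  field_simp

open MeasureTheory intervalIntegral in
/-- Inverse source operator bound (Lemma 3.1, scalar level): with `g ≥ c_g > 0`,
`μₙ = ∫₀^T s^{α−1}E_{α,α}(−λₙ s^α) g(T−s) ds ≥ c_g λₙ⁻¹(1 − E_{α,1}(−λₙT^α)) > 0`, and
`1/(λₙ μₙ) ≤ c_g⁻¹ (1 − E_{α,1}(−λ₁T^α))⁻¹`. -/
theorem inverse_source_operator_bound (α T c_g lam₁ : ℝ) (hα0 : 0 < α) (hα1 : α < 1)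
    (hT : 0 < T) (hcg : 0 < c_g) (hlam₁ : 0 < lam₁)
    (lam : ℕ → ℝ) (hlam : ∀ n, lam₁ ≤ lam n)
    (g : ℝ → ℝ) (hgmeas : Measurable g) (hg : ∀ s, c_g ≤ g s)
    (hint : ∀ n, IntervalIntegrable
      (fun s => s ^ (α - 1) * ML α α (-(lam n * s ^ α)) * g (T - s))
      MeasureTheory.volume 0 T)
    (hint' : ∀ n, IntervalIntegrable
      (fun s => s ^ (α - 1) * ML α α (-(lam n * s ^ α))) MeasureTheory.volume 0 T)
    (hEpos : ∀ t : ℝ, 0 ≤ t → 0 < ML α α (-t))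
    (hidentity : ∀ l : ℝ, 0 < l →
      ∫ s in (0 : ℝ)..T, s ^ (α - 1) * ML α α (-(l * s ^ α)) =
        l⁻¹ * (1 - ML α 1 (-(l * T ^ α))))
    (hanti : AntitoneOn (fun x : ℝ => ML α 1 (-x)) (Set.Ici 0))
    (hrange : ∀ x : ℝ, 0 ≤ x → ML α 1 (-x) ∈ Set.Ioc (0 : ℝ) 1) :
    ∀ n : ℕ,
      c_g * (lam n)⁻¹ * (1 - ML α 1 (-(lam n * T ^ α))) ≤
        (∫ s in (0 : ℝ)..T, s ^ (α - 1) * ML α α (-(lam n * s ^ α)) * g (T - s)) ∧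
      0 < (∫ s in (0 : ℝ)..T, s ^ (α - 1) * ML α α (-(lam n * s ^ α)) * g (T - s)) ∧
      1 / (lam n * ∫ s in (0 : ℝ)..T, s ^ (α - 1) * ML α α (-(lam n * s ^ α)) * g (T - s)) ≤
        c_g⁻¹ * (1 - ML α 1 (-(lam₁ * T ^ α)))⁻¹ := by
  intro n
  set l := lam n with hl
  have hlpos : 0 < l := lt_of_lt_of_le hlam₁ (hlam n)
  set μ := ∫ s in (0 : ℝ)..T, s ^ (α - 1) * ML α α (-(l * s ^ α)) * g (T - s) with hμ
  -- positivity of 1 - E for lam n and lam₁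
  have hEn : 0 < 1 - ML α 1 (-(l * T ^ α)) :=
    pos_one_sub_ML hα0 hT hlpos (hint' n) hEpos (hidentity l hlpos)
  have hii1 : IntervalIntegrable (fun s => s ^ (α - 1) * ML α α (-(lam₁ * s ^ α)))
      MeasureTheory.volume 0 T :=
    intervalIntegrable_kernel_of_le hα0 hT hlam₁ (hlam n) (hint' n)
  have hE1 : 0 < 1 - ML α 1 (-(lam₁ * T ^ α)) :=
    pos_one_sub_ML hα0 hT hlam₁ hii1 hEpos (hidentity lam₁ hlam₁)
  -- lower bound for μ
  have hlow : c_g * l⁻¹ * (1 - ML α 1 (-(l * T ^ α))) ≤ μ := by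
    have hmono : (∫ s in (0 : ℝ)..T, c_g * (s ^ (α - 1) * ML α α (-(l * s ^ α)))) ≤ μ := by
      apply integral_mono_on hT.le ((hint' n).const_mul c_g) (hint n)
      intro x hx
      have h1 : 0 ≤ x ^ (α - 1) * ML α α (-(l * x ^ α)) := by
        have := hEpos (l * x ^ α) (mul_nonneg hlpos.le (Real.rpow_nonneg hx.1 _))
        have hr : (0:ℝ) ≤ x ^ (α - 1) := Real.rpow_nonneg hx.1 _
        positivity
      calc c_g * (x ^ (α - 1) * ML α α (-(l * x ^ α)))
          = (x ^ (α - 1) * ML α α (-(l * x ^ α))) * c_g := by ring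
        _ ≤ (x ^ (α - 1) * ML α α (-(l * x ^ α))) * g (T - x) :=
            mul_le_mul_of_nonneg_left (hg (T - x)) h1
        _ = x ^ (α - 1) * ML α α (-(l * x ^ α)) * g (T - x) := rfl
    rw [intervalIntegral.integral_const_mul, hidentity l hlpos] at hmono
    calc c_g * l⁻¹ * (1 - ML α 1 (-(l * T ^ α)))
        = c_g * (l⁻¹ * (1 - ML α 1 (-(l * T ^ α)))) := by ring
      _ ≤ μ := hmono
  have hlowpos : 0 < c_g * l⁻¹ * (1 - ML α 1 (-(l * T ^ α))) := by
    have : 0 < l⁻¹ := inv_pos.2 hlpos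
    positivity
  have hμpos : 0 < μ := lt_of_lt_of_le hlowpos hlow
  refine ⟨hlow, hμpos, ?_⟩
  -- final inequality
  have hE1n : 1 - ML α 1 (-(lam₁ * T ^ α)) ≤ 1 - ML α 1 (-(l * T ^ α)) := by
    have hmem1 : lam₁ * T ^ α ∈ Set.Ici (0 : ℝ) := by
      simp only [Set.mem_Ici]; positivity
    have hmem2 : l * T ^ α ∈ Set.Ici (0 : ℝ) := by
      simp only [Set.mem_Ici]; positivity
    have hle : lam₁ * T ^ α ≤ l * T ^ α :=
      mul_le_mul_of_nonneg_right (hlam n) (Real.rpow_nonneg hT.le _)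
    have := hanti hmem1 hmem2 hle
    simpa using sub_le_sub_left this 1
  have hkey : c_g * (1 - ML α 1 (-(lam₁ * T ^ α))) ≤ l * μ := by
    calc c_g * (1 - ML α 1 (-(lam₁ * T ^ α)))
        ≤ c_g * (1 - ML α 1 (-(l * T ^ α))) :=
          mul_le_mul_of_nonneg_left hE1n hcg.le
      _ = l * (c_g * l⁻¹ * (1 - ML α 1 (-(l * T ^ α)))) := by
          field_simp
      _ ≤ l * μ := mul_le_mul_of_nonneg_left hlow hlpos.le
  have hden : 0 < c_g * (1 - ML α 1 (-(lam₁ * T ^ α))) := mul_pos hcg hE1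
  calc 1 / (l * μ) ≤ 1 / (c_g * (1 - ML α 1 (-(lam₁ * T ^ α)))) :=
        one_div_le_one_div_of_le hden hkey
    _ = c_g⁻¹ * (1 - ML α 1 (-(lam₁ * T ^ α)))⁻¹ := by rw [one_div, mul_inv]
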